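/- (Tail integral estimates for monomial potential) Let n ≥ 1 and V(x) = -x^{2n+2}/(2n+2). For all x < 0, (-e^{V(x)}/x^{2n+1})(1 - (2n+1)/x^{2n+2}) ≤ ∫_{-∞}^x e^{V(s)} ds ≤ (-e^{V(x)}/x^{2n+1})(1 - (2n+1)/x^{2n+2} + (2n+1)(4n+3)/x^{4n+4}). In particular e^{V(x)}/∫_{-∞}^x e^{V(s)} ds ~ |x|^{2n+1} as x → -∞. -/

import Mathlib

open MeasureTheory Real Set Filter Topology

namespace MonomialTailAux

noncomputable def f (n : ℕ) (s : ℝ) : ℝ := Real.exp (-s ^ (2 * n + 2) / (2 * n + 2))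

noncomputable def G (n : ℕ) (x : ℝ) : ℝ :=
  (-f n x / x ^ (2 * n + 1)) * (1 - (2 * (n : ℝ) + 1) / x ^ (2 * n + 2))

noncomputable def H (n : ℕ) (x : ℝ) : ℝ :=
  (-f n x / x ^ (2 * n + 1)) * (1 - (2 * (n : ℝ) + 1) / x ^ (2 * n + 2) +
    (2 * (n : ℝ) + 1) * (4 * (n : ℝ) + 3) / x ^ (4 * n + 4))

lemma f_pos (n : ℕ) (s : ℝ) : 0 < f n s := Real.exp_pos _

lemma f_cont (n : ℕ) : Continuous (f n) := by
  unfold f; continuity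

lemma f_deriv (n : ℕ) (x : ℝ) : HasDerivAt (f n) (-x ^ (2 * n + 1) * f n x) x := by
  have h1 : HasDerivAt (fun s : ℝ => -s ^ (2 * n + 2) / (2 * n + 2))
      (-((2 * n + 2 : ℕ) * x ^ (2 * n + 2 - 1)) / (2 * n + 2)) x :=
    ((hasDerivAt_pow (2 * n + 2) x).neg).div_const _
  have h2 := h1.exp
  convert h2 using 1
  · rfl
  have h0 : (2 * n + 2 - 1) = 2 * n + 1 := by omega
  rw [h0]
  unfold f
  have h3 : (2 * (n : ℝ) + 2) ≠ 0 := by positivity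
  push_cast
  field_simp

lemma f_integrable (n : ℕ) : Integrable (f n) := by
  have hpos : (0:ℝ) < 2 * (n:ℝ) + 2 := by positivity
  have hg : Integrable (fun s : ℝ => Real.exp (1 / (2 * (n:ℝ) + 2)) *
      Real.exp (-(1 / (2 * (n:ℝ) + 2)) * s ^ 2)) :=
    (integrable_exp_neg_mul_sq (b := 1 / (2 * (n:ℝ) + 2)) (by positivity)).const_mul _
  refine hg.mono' (Continuous.aestronglyMeasurable (f_cont n)) ?_
  refine Filter.Eventually.of_forall fun s => ?_
  unfold f
  rw [Real.norm_eq_abs, abs_of_pos (Real.exp_pos _)]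
  rw [← Real.exp_add]
  apply Real.exp_le_exp.mpr
  have key : s ^ 2 - 1 ≤ s ^ (2 * n + 2) := by
    have h1 : s ^ (2 * n + 2) = (s ^ 2) ^ (n + 1) := by ring
    rw [h1]
    set t := s ^ 2 with ht
    have ht0 : 0 ≤ t := sq_nonneg s
    rcases le_or_gt t 1 with h | h
    · nlinarith [pow_nonneg ht0 (n + 1)]
    · have : t ≤ t ^ (n + 1) := le_self_pow₀ h.le (by omega)
      linarith
  rw [show (1 / (2*(n:ℝ)+2) + -(1/(2*(n:ℝ)+2)) * s^2) = (1 - s^2)/(2*(n:ℝ)+2) by ring]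
  exact (div_le_div_iff_of_pos_right hpos).mpr (by linarith)

lemma G_deriv (n : ℕ) (x : ℝ) (hx : x ≠ 0) :
    HasDerivAt (G n)
      (f n x * (1 - (2 * (n:ℝ) + 1) * (4 * (n:ℝ) + 3) / x ^ (4 * n + 4))) x := by
  have hp1 : x ^ (2 * n + 1) ≠ 0 := pow_ne_zero _ hx
  have hp2 : x ^ (2 * n + 2) ≠ 0 := pow_ne_zero _ hx
  have hA : HasDerivAt (fun y : ℝ => -f n y / y ^ (2 * n + 1))
      ((-(-x ^ (2 * n + 1) * f n x) * x ^ (2 * n + 1) -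
        (-f n x) * ((2 * n + 1 : ℕ) * x ^ (2 * n + 1 - 1))) / (x ^ (2 * n + 1)) ^ 2) x :=
    ((f_deriv n x).neg).div (hasDerivAt_pow (2 * n + 1) x) hp1
  have hB : HasDerivAt (fun y : ℝ => 1 - (2 * (n:ℝ) + 1) / y ^ (2 * n + 2))
      (-(((0 : ℝ) * x ^ (2 * n + 2) -
        (2 * (n:ℝ) + 1) * ((2 * n + 2 : ℕ) * x ^ (2 * n + 2 - 1))) /
        (x ^ (2 * n + 2)) ^ 2)) x :=
    (((hasDerivAt_const x (2 * (n:ℝ) + 1)).div (hasDerivAt_pow (2 * n + 2) x) hp2)).const_sub 1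
  have h := hA.mul hB
  convert h using 1
  · rfl
  · rfl
  · rfl
  have e1 : 2 * n + 1 - 1 = 2 * n := by omega
  have e2 : 2 * n + 2 - 1 = 2 * n + 1 := by omega
  rw [e1, e2]
  push_cast
  field_simp
  ring

lemma H_deriv (n : ℕ) (x : ℝ) (hx : x ≠ 0) :
    HasDerivAt (H n)
      (f n x * (1 + (2 * (n:ℝ) + 1) * (4 * (n:ℝ) + 3) * (6 * (n:ℝ) + 5) / x ^ (6 * n + 6))) x := by
  have hp1 : x ^ (2 * n + 1) ≠ 0 := pow_ne_zero _ hx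
  have hp2 : x ^ (2 * n + 2) ≠ 0 := pow_ne_zero _ hx
  have hp4 : x ^ (4 * n + 4) ≠ 0 := pow_ne_zero _ hx
  have hA : HasDerivAt (fun y : ℝ => -f n y / y ^ (2 * n + 1))
      ((-(-x ^ (2 * n + 1) * f n x) * x ^ (2 * n + 1) -
        (-f n x) * ((2 * n + 1 : ℕ) * x ^ (2 * n + 1 - 1))) / (x ^ (2 * n + 1)) ^ 2) x :=
    ((f_deriv n x).neg).div (hasDerivAt_pow (2 * n + 1) x) hp1
  have hB : HasDerivAt
      (fun y : ℝ => 1 - (2 * (n:ℝ) + 1) / y ^ (2 * n + 2) +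
        (2 * (n:ℝ) + 1) * (4 * (n:ℝ) + 3) / y ^ (4 * n + 4))
      (-(((0 : ℝ) * x ^ (2 * n + 2) -
        (2 * (n:ℝ) + 1) * ((2 * n + 2 : ℕ) * x ^ (2 * n + 2 - 1))) /
        (x ^ (2 * n + 2)) ^ 2) +
        ((0 : ℝ) * x ^ (4 * n + 4) - (2 * (n:ℝ) + 1) * (4 * (n:ℝ) + 3) *
          ((4 * n + 4 : ℕ) * x ^ (4 * n + 4 - 1))) / (x ^ (4 * n + 4)) ^ 2) x :=
    ((((hasDerivAt_const x (2 * (n:ℝ) + 1)).div (hasDerivAt_pow (2 * n + 2) x) hp2)).const_sub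
      1).add
      (((hasDerivAt_const x ((2 * (n:ℝ) + 1) * (4 * (n:ℝ) + 3))).div
        (hasDerivAt_pow (4 * n + 4) x) hp4))
  have h := hA.mul hB
  convert h using 1
  · rfl
  · rfl
  · rfl
  have e1 : 2 * n + 1 - 1 = 2 * n := by omega
  have e2 : 2 * n + 2 - 1 = 2 * n + 1 := by omega
  have e4 : 4 * n + 4 - 1 = 4 * n + 3 := by omega
  rw [e1, e2, e4]
  push_cast
  field_simp
  ring

lemma even_pow_tendsto (k : ℕ) (hk : k ≠ 0) (he : Even k) :
    Tendsto (fun y : ℝ => y ^ k) atBot atTop := by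
  have habs : Tendsto (fun y : ℝ => |y|) atBot atTop := tendsto_abs_atBot_atTop
  have h := (tendsto_pow_atTop hk).comp habs
  refine h.congr fun y => ?_
  simp [he.pow_abs]

lemma odd_pow_tendsto (k : ℕ) (ho : Odd k) :
    Tendsto (fun y : ℝ => y ^ k) atBot atBot := by
  have hneg : Tendsto (fun y : ℝ => -y) atBot atTop := tendsto_neg_atBot_atTop
  have hneg2 : Tendsto (fun y : ℝ => -y) atTop atBot := tendsto_neg_atTop_atBot
  have h := hneg2.comp ((tendsto_pow_atTop ho.pos.ne').comp hneg)
  refine h.congr fun y => ?_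
  simp [ho.neg_pow]

lemma inv_even_pow_tendsto (k : ℕ) (hk : k ≠ 0) (he : Even k) :
    Tendsto (fun y : ℝ => (y ^ k)⁻¹) atBot (𝓝 0) :=
  (even_pow_tendsto k hk he).inv_tendsto_atTop

lemma inv_odd_pow_tendsto (k : ℕ) (ho : Odd k) :
    Tendsto (fun y : ℝ => (y ^ k)⁻¹) atBot (𝓝 0) := by
  have hneg2 : Tendsto (fun y : ℝ => -y) atBot atTop := tendsto_neg_atBot_atTop
  have h := ((hneg2.comp (odd_pow_tendsto k ho)).inv_tendsto_atTop).neg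
  rw [neg_zero] at h
  refine h.congr fun y => ?_
  simp [Function.comp, inv_neg]

lemma f_tendsto (n : ℕ) : Tendsto (f n) atBot (𝓝 0) := by
  have h1 : Tendsto (fun y : ℝ => -y ^ (2 * n + 2) / (2 * n + 2)) atBot atBot := by
    apply Tendsto.atBot_div_const (by positivity)
    have hneg2 : Tendsto (fun y : ℝ => -y) atTop atBot := tendsto_neg_atTop_atBot
    exact hneg2.comp (even_pow_tendsto (2 * n + 2) (by omega) ⟨n + 1, by ring⟩)
  exact Real.tendsto_exp_atBot.comp h1

lemma G_tendsto (n : ℕ) : Tendsto (G n) atBot (𝓝 0) := by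
  have h1 : Tendsto (fun y : ℝ => -f n y * (y ^ (2 * n + 1))⁻¹) atBot (𝓝 (-0 * 0)) :=
    ((f_tendsto n).neg).mul (inv_odd_pow_tendsto (2 * n + 1) ⟨n, by ring⟩)
  have h2 : Tendsto (fun y : ℝ => 1 - (2 * (n:ℝ) + 1) * (y ^ (2 * n + 2))⁻¹) atBot
      (𝓝 (1 - (2 * (n:ℝ) + 1) * 0)) :=
    tendsto_const_nhds.sub
      (tendsto_const_nhds.mul (inv_even_pow_tendsto (2 * n + 2) (by omega) ⟨n + 1, by ring⟩))
  have h := h1.mul h2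
  rw [show (-(0:ℝ) * 0) * (1 - (2 * (n:ℝ) + 1) * 0) = 0 by ring] at h
  exact h.congr fun y => by simp [G, div_eq_mul_inv]

lemma H_tendsto (n : ℕ) : Tendsto (H n) atBot (𝓝 0) := by
  have h1 : Tendsto (fun y : ℝ => -f n y * (y ^ (2 * n + 1))⁻¹) atBot (𝓝 (-0 * 0)) :=
    ((f_tendsto n).neg).mul (inv_odd_pow_tendsto (2 * n + 1) ⟨n, by ring⟩)
  have h2 : Tendsto (fun y : ℝ => 1 - (2 * (n:ℝ) + 1) * (y ^ (2 * n + 2))⁻¹ +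
      (2 * (n:ℝ) + 1) * (4 * (n:ℝ) + 3) * (y ^ (4 * n + 4))⁻¹) atBot
      (𝓝 (1 - (2 * (n:ℝ) + 1) * 0 + (2 * (n:ℝ) + 1) * (4 * (n:ℝ) + 3) * 0)) :=
    (tendsto_const_nhds.sub
      (tendsto_const_nhds.mul (inv_even_pow_tendsto (2 * n + 2) (by omega) ⟨n + 1, by ring⟩))).add
      (tendsto_const_nhds.mul (inv_even_pow_tendsto (4 * n + 4) (by omega) ⟨2 * n + 2, by ring⟩))
  have h := h1.mul h2
  rw [show (-(0:ℝ) * 0) * (1 - (2 * (n:ℝ) + 1) * 0 +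
    (2 * (n:ℝ) + 1) * (4 * (n:ℝ) + 3) * 0) = 0 by ring] at h
  exact h.congr fun y => by simp [H, div_eq_mul_inv]

lemma bounds (n : ℕ) (x : ℝ) (hx : x < 0) :
    G n x ≤ (∫ s in Iic x, f n s) ∧ (∫ s in Iic x, f n s) ≤ H n x := by
  have hInt : IntegrableOn (f n) (Iic x) := (f_integrable n).integrableOn
  have hlim : Tendsto (fun y => ∫ s in y..x, f n s) atBot (𝓝 (∫ s in Iic x, f n s)) :=
    intervalIntegral_tendsto_integral_Iic x hInt tendsto_id
  constructor
  · have hev : ∀ᶠ y in atBot, G n x - G n y ≤ ∫ s in y..x, f n s := by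
      filter_upwards [eventually_le_atBot x] with y hy
      have hne : ∀ s ∈ uIcc y x, s ≠ 0 := by
        intro s hs
        rw [uIcc_of_le hy] at hs
        exact ne_of_lt (lt_of_le_of_lt hs.2 hx)
      have hcont : ContinuousOn
          (fun s : ℝ => f n s * (1 - (2 * (n:ℝ) + 1) * (4 * (n:ℝ) + 3) / s ^ (4 * n + 4)))
          (uIcc y x) :=
        ((f_cont n).continuousOn).mul (continuousOn_const.sub (continuousOn_const.div
          ((continuous_pow _).continuousOn) (fun s hs => pow_ne_zero _ (hne s hs))))
      have hFTC : (∫ s in y..x,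
          f n s * (1 - (2 * (n:ℝ) + 1) * (4 * (n:ℝ) + 3) / s ^ (4 * n + 4)))
          = G n x - G n y :=
        intervalIntegral.integral_eq_sub_of_hasDerivAt (fun s hs => G_deriv n s (hne s hs))
          hcont.intervalIntegrable
      rw [← hFTC]
      apply intervalIntegral.integral_mono_on hy hcont.intervalIntegrable
        ((f_cont n).intervalIntegrable _ _)
      intro s hs
      have hs0 : s ≠ 0 := ne_of_lt (lt_of_le_of_lt hs.2 hx)
      have hpow : 0 < s ^ (4 * n + 4) := Even.pow_pos ⟨2 * n + 2, by ring⟩ hs0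
      have hq : 0 ≤ (2 * (n:ℝ) + 1) * (4 * (n:ℝ) + 3) / s ^ (4 * n + 4) := by positivity
      nlinarith [f_pos n s]
    have h := le_of_tendsto_of_tendsto (tendsto_const_nhds.sub (G_tendsto n)) hlim hev
    simpa using h
  · have hev : ∀ᶠ y in atBot, (∫ s in y..x, f n s) ≤ H n x - H n y := by
      filter_upwards [eventually_le_atBot x] with y hy
      have hne : ∀ s ∈ uIcc y x, s ≠ 0 := by
        intro s hs
        rw [uIcc_of_le hy] at hs
        exact ne_of_lt (lt_of_le_of_lt hs.2 hx)
      have hcont : ContinuousOn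
          (fun s : ℝ => f n s *
            (1 + (2 * (n:ℝ) + 1) * (4 * (n:ℝ) + 3) * (6 * (n:ℝ) + 5) / s ^ (6 * n + 6)))
          (uIcc y x) :=
        ((f_cont n).continuousOn).mul (continuousOn_const.add (continuousOn_const.div
          ((continuous_pow _).continuousOn) (fun s hs => pow_ne_zero _ (hne s hs))))
      have hFTC : (∫ s in y..x,
          f n s * (1 + (2 * (n:ℝ) + 1) * (4 * (n:ℝ) + 3) * (6 * (n:ℝ) + 5) / s ^ (6 * n + 6)))
          = H n x - H n y :=
        intervalIntegral.integral_eq_sub_of_hasDerivAt (fun s hs => H_deriv n s (hne s hs))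
          hcont.intervalIntegrable
      rw [← hFTC]
      apply intervalIntegral.integral_mono_on hy ((f_cont n).intervalIntegrable _ _)
        hcont.intervalIntegrable
      intro s hs
      have hs0 : s ≠ 0 := ne_of_lt (lt_of_le_of_lt hs.2 hx)
      have hpow : 0 < s ^ (6 * n + 6) := Even.pow_pos ⟨3 * n + 3, by ring⟩ hs0
      have hq : 0 ≤ (2 * (n:ℝ) + 1) * (4 * (n:ℝ) + 3) * (6 * (n:ℝ) + 5) / s ^ (6 * n + 6) := by
        positivity
      nlinarith [f_pos n s]
    have h := le_of_tendsto_of_tendsto hlim (tendsto_const_nhds.sub (H_tendsto n)) hev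
    simpa using h

end MonomialTailAux

open MonomialTailAux in
/-- Tail integral estimates for the monomial potential `V x = -x^(2n+2)/(2n+2)`, `n ≥ 1`:
for all `x < 0`,
`(-e^{V x}/x^{2n+1}) (1 - (2n+1)/x^{2n+2}) ≤ ∫_{-∞}^x e^{V s} ds
  ≤ (-e^{V x}/x^{2n+1}) (1 - (2n+1)/x^{2n+2} + (2n+1)(4n+3)/x^{4n+4})`,
and consequently `e^{V x} / ∫_{-∞}^x e^{V s} ds ~ |x|^{2n+1}` as `x → -∞`. -/
theorem monomial_potential_tail_estimates (n : ℕ) (hn : 1 ≤ n) :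
    (∀ x : ℝ, x < 0 →
      (-Real.exp (-x ^ (2 * n + 2) / (2 * n + 2)) / x ^ (2 * n + 1)) *
          (1 - (2 * n + 1) / x ^ (2 * n + 2))
        ≤ (∫ s in Iic x, Real.exp (-s ^ (2 * n + 2) / (2 * n + 2))) ∧
      (∫ s in Iic x, Real.exp (-s ^ (2 * n + 2) / (2 * n + 2)))
        ≤ (-Real.exp (-x ^ (2 * n + 2) / (2 * n + 2)) / x ^ (2 * n + 1)) *
          (1 - (2 * n + 1) / x ^ (2 * n + 2) +
            (2 * n + 1) * (4 * n + 3) / x ^ (4 * n + 4))) ∧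
    Tendsto
      (fun x : ℝ =>
        (Real.exp (-x ^ (2 * n + 2) / (2 * n + 2)) /
            ∫ s in Iic x, Real.exp (-s ^ (2 * n + 2) / (2 * n + 2))) /
          |x| ^ (2 * n + 1))
      atBot (nhds 1) := by
  constructor
  · intro x hx
    exact bounds n x hx
  · have key : Tendsto
        (fun x : ℝ => (f n x / ∫ s in Iic x, f n s) / |x| ^ (2 * n + 1)) atBot (𝓝 1) := by
      have ha : Tendsto (fun x : ℝ => (2 * (n:ℝ) + 1) / x ^ (2 * n + 2)) atBot (𝓝 0) := by
        have h := (tendsto_const_nhds (x := (2 * (n:ℝ) + 1)) (f := atBot)).mul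
          (inv_even_pow_tendsto (2 * n + 2) (by omega) ⟨n + 1, by ring⟩)
        rw [mul_zero] at h
        exact h.congr fun y => (div_eq_mul_inv _ _).symm
      have hb : Tendsto (fun x : ℝ => (2 * (n:ℝ) + 1) * (4 * (n:ℝ) + 3) / x ^ (4 * n + 4))
          atBot (𝓝 0) := by
        have h := (tendsto_const_nhds (x := (2 * (n:ℝ) + 1) * (4 * (n:ℝ) + 3)) (f := atBot)).mul
          (inv_even_pow_tendsto (4 * n + 4) (by omega) ⟨2 * n + 2, by ring⟩)
        rw [mul_zero] at h
        exact h.congr fun y => (div_eq_mul_inv _ _).symm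
      have hU : Tendsto (fun x : ℝ => (1 - (2 * (n:ℝ) + 1) / x ^ (2 * n + 2))⁻¹)
          atBot (𝓝 1) := by
        have h := (tendsto_const_nhds.sub ha).inv₀ (by norm_num : (1:ℝ) - 0 ≠ 0)
        simpa using h
      have hL : Tendsto (fun x : ℝ => (1 - (2 * (n:ℝ) + 1) / x ^ (2 * n + 2) +
          (2 * (n:ℝ) + 1) * (4 * (n:ℝ) + 3) / x ^ (4 * n + 4))⁻¹) atBot (𝓝 1) := by
        have h := ((tendsto_const_nhds.sub ha).add hb).inv₀
          (by norm_num : (1:ℝ) - 0 + 0 ≠ 0)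
        simpa using h
      have hev : ∀ᶠ x in atBot,
          ((1 - (2 * (n:ℝ) + 1) / x ^ (2 * n + 2) +
            (2 * (n:ℝ) + 1) * (4 * (n:ℝ) + 3) / x ^ (4 * n + 4))⁻¹
            ≤ (f n x / ∫ s in Iic x, f n s) / |x| ^ (2 * n + 1)) ∧
          ((f n x / ∫ s in Iic x, f n s) / |x| ^ (2 * n + 1)
            ≤ (1 - (2 * (n:ℝ) + 1) / x ^ (2 * n + 2))⁻¹) := by
        filter_upwards [eventually_lt_atBot (0:ℝ),
          ha.eventually_lt_const (show (0:ℝ) < 1/2 by norm_num)] with x hx hax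
        have hx0 : x ≠ 0 := ne_of_lt hx
        have hK : 0 < |x| ^ (2 * n + 1) := pow_pos (abs_pos.mpr hx0) _
        have hKne : |x| ^ (2 * n + 1) ≠ 0 := hK.ne'
        have hxo : x ^ (2 * n + 1) = -|x| ^ (2 * n + 1) := by
          rw [abs_of_neg hx, Odd.neg_pow ⟨n, by ring⟩, neg_neg]
        have h1a : 0 < 1 - (2 * (n:ℝ) + 1) / x ^ (2 * n + 2) := by linarith
        have hbx : 0 ≤ (2 * (n:ℝ) + 1) * (4 * (n:ℝ) + 3) / x ^ (4 * n + 4) := by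
          have : 0 < x ^ (4 * n + 4) := Even.pow_pos ⟨2 * n + 2, by ring⟩ hx0
          positivity
        have hGK : G n x * |x| ^ (2 * n + 1) =
            f n x * (1 - (2 * (n:ℝ) + 1) / x ^ (2 * n + 2)) := by
          unfold G
          rw [hxo]
          field_simp
        have hHK : H n x * |x| ^ (2 * n + 1) =
            f n x * (1 - (2 * (n:ℝ) + 1) / x ^ (2 * n + 2) +
              (2 * (n:ℝ) + 1) * (4 * (n:ℝ) + 3) / x ^ (4 * n + 4)) := by
          unfold H
          rw [hxo]
          field_simp
        obtain ⟨hF1, hF2⟩ := bounds n x hx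
        have hGKpos : 0 < G n x * |x| ^ (2 * n + 1) := by
          rw [hGK]; exact mul_pos (f_pos n x) h1a
        have hGpos : 0 < G n x := by nlinarith
        have hFpos : 0 < ∫ s in Iic x, f n s := hGpos.trans_le hF1
        constructor
        · calc (1 - (2 * (n:ℝ) + 1) / x ^ (2 * n + 2) +
              (2 * (n:ℝ) + 1) * (4 * (n:ℝ) + 3) / x ^ (4 * n + 4))⁻¹
              = f n x / (H n x * |x| ^ (2 * n + 1)) := by
                rw [hHK, div_mul_cancel_left₀ (f_pos n x).ne']
            _ ≤ f n x / ((∫ s in Iic x, f n s) * |x| ^ (2 * n + 1)) :=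
                div_le_div_of_nonneg_left (f_pos n x).le (mul_pos hFpos hK)
                  (mul_le_mul_of_nonneg_right hF2 hK.le)
            _ = (f n x / ∫ s in Iic x, f n s) / |x| ^ (2 * n + 1) := (div_div _ _ _).symm
        · calc (f n x / ∫ s in Iic x, f n s) / |x| ^ (2 * n + 1)
              = f n x / ((∫ s in Iic x, f n s) * |x| ^ (2 * n + 1)) := div_div _ _ _
            _ ≤ f n x / (G n x * |x| ^ (2 * n + 1)) :=
                div_le_div_of_nonneg_left (f_pos n x).le hGKpos
                  (mul_le_mul_of_nonneg_right hF1 hK.le)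
            _ = (1 - (2 * (n:ℝ) + 1) / x ^ (2 * n + 2))⁻¹ := by
                rw [hGK, div_mul_cancel_left₀ (f_pos n x).ne']
      exact tendsto_of_tendsto_of_tendsto_of_le_of_le' hL hU
        (hev.mono fun x h => h.1) (hev.mono fun x h => h.2)
    exact key
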